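/- Let ε = ±1 and let ∇ be the Type B connection with C₁₂¹ = 0, C₂₂¹ = ε, C₂₂² = 2εC₁₁², and suppose C₁₁¹ − C₁₂² − 1 ≠ 0. Set μ = (−(C₁₁¹)² + 2C₁₁¹C₁₂² + 2ε(C₁₁²)² − (C₁₂²)² + 2C₁₂² + 1)/(C₁₁¹ − C₁₂² − 1)² and α = μ(1 + C₁₂² − C₁₁¹). Then f(x¹,x²) = (x¹)^α satisfies the affine quasi-Einstein equation H(f) = μ f ρ_s. -/

import Mathlib

open Real

/-- Partial derivative ∂_i on ℝ². -/
noncomputable def pd (i : Fin 2) (f : ℝ × ℝ → ℝ) : ℝ × ℝ → ℝ :=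
  fun p => if i = 0 then deriv (fun t => f (t, p.2)) p.1
           else deriv (fun t => f (p.1, t)) p.2

/-- Affine Hessian H(f)_{ij} = ∂_i∂_j f − Σ_k Γ_{ij}^k ∂_k f. -/
noncomputable def Hess (Γ : Fin 2 → Fin 2 → Fin 2 → (ℝ × ℝ → ℝ))
    (f : ℝ × ℝ → ℝ) (i j : Fin 2) : ℝ × ℝ → ℝ :=
  fun p => pd i (pd j f) p - ∑ k, Γ i j k p * pd k f p

/-- Ricci tensor ρ_{jk} = ∂_i Γ_{jk}^i − ∂_j Γ_{ik}^i + Γ_{il}^i Γ_{jk}^l − Γ_{jl}^i Γ_{ik}^l. -/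
noncomputable def Ric (Γ : Fin 2 → Fin 2 → Fin 2 → (ℝ × ℝ → ℝ)) (j k : Fin 2) :
    ℝ × ℝ → ℝ :=
  fun p => (∑ i, pd i (Γ j k i) p) - (∑ i, pd j (Γ i k i) p)
    + (∑ i, ∑ l, Γ i l i p * Γ j k l p) - (∑ i, ∑ l, Γ j l i p * Γ i k l p)

/-- Symmetrized Ricci tensor. -/
noncomputable def RicS (Γ : Fin 2 → Fin 2 → Fin 2 → (ℝ × ℝ → ℝ)) (i j : Fin 2) :
    ℝ × ℝ → ℝ :=
  fun p => (Ric Γ i j p + Ric Γ j i p) / 2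

/-- Covariant derivative of the Ricci tensor: (∇ρ)(i,j;k). -/
noncomputable def nabRic (Γ : Fin 2 → Fin 2 → Fin 2 → (ℝ × ℝ → ℝ)) (i j k : Fin 2) :
    ℝ × ℝ → ℝ :=
  fun p => pd k (Ric Γ i j) p - ∑ l, Γ k i l p * Ric Γ l j p
    - ∑ l, Γ k j l p * Ric Γ i l p

/-- Type B Christoffel symbols Γ_{ij}^k = C_{ij}^k / x¹. -/
noncomputable def ΓB (C : Fin 2 → Fin 2 → Fin 2 → ℝ) :
    Fin 2 → Fin 2 → Fin 2 → (ℝ × ℝ → ℝ) :=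
  fun i j k p => C i j k / p.1

/-- Type B with C₁₂¹ = 0, C₂₂¹ = ε, C₂₂² = 2εC₁₁² and C₁₁¹ − C₁₂² − 1 ≠ 0:
f = (x¹)^α with the stated μ and α = μ(1 + C₁₂² − C₁₁¹) solves H(f) = μ f ρ_s. -/

lemma pd0_div (c : ℝ) (p : ℝ × ℝ) (h : p.1 ≠ 0) :
    pd 0 (fun q : ℝ × ℝ => c / q.1) p = -c / p.1 ^ 2 := by
  simp only [pd, if_pos rfl, div_eq_mul_inv, ↓reduceIte]
  rw [deriv_const_mul _ (differentiableAt_inv h), deriv_inv]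
  field_simp

lemma pd1_div (c : ℝ) (p : ℝ × ℝ) :
    pd 1 (fun q : ℝ × ℝ => c / q.1) p = 0 := by
  simp [pd]

lemma pdf0 (a : ℝ) (p : ℝ × ℝ) (h : p.1 ≠ 0) :
    pd 0 (fun q : ℝ × ℝ => q.1 ^ a) p = a * p.1 ^ (a - 1) := by
  simp only [pd, if_pos rfl]
  exact Real.deriv_rpow_const _ _

lemma pdf1 (a : ℝ) (p : ℝ × ℝ) :
    pd 1 (fun q : ℝ × ℝ => q.1 ^ a) p = 0 := by
  simp [pd]

lemma pdf00 (a : ℝ) (p : ℝ × ℝ) (h : 0 < p.1) :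
    pd 0 (pd 0 (fun q : ℝ × ℝ => q.1 ^ a)) p = a * ((a - 1) * p.1 ^ (a - 2)) := by
  have hne : p.1 ≠ 0 := ne_of_gt h
  have key : (fun t => pd 0 (fun q : ℝ × ℝ => q.1 ^ a) (t, p.2))
      =ᶠ[nhds p.1] fun t => a * t ^ (a - 1) := by
    filter_upwards [eventually_ne_nhds hne] with t ht
    exact pdf0 a (t, p.2) ht
  show deriv (fun t => pd 0 (fun q : ℝ × ℝ => q.1 ^ a) (t, p.2)) p.1 = _
  rw [key.deriv_eq, deriv_const_mul _ (Real.differentiableAt_rpow_const_of_ne _ hne),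
    Real.deriv_rpow_const]
  ring_nf

lemma pdf01 (a : ℝ) (p : ℝ × ℝ) :
    pd 0 (pd 1 (fun q : ℝ × ℝ => q.1 ^ a)) p = 0 := by
  have : pd 1 (fun q : ℝ × ℝ => q.1 ^ a) = fun _ => 0 := funext fun q => pdf1 a q
  rw [this]; simp [pd]

lemma pdf10 (a : ℝ) (p : ℝ × ℝ) :
    pd 1 (pd 0 (fun q : ℝ × ℝ => q.1 ^ a)) p = 0 := by
  simp [pd]

lemma pdf11 (a : ℝ) (p : ℝ × ℝ) :
    pd 1 (pd 1 (fun q : ℝ × ℝ => q.1 ^ a)) p = 0 := by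
  have : pd 1 (fun q : ℝ × ℝ => q.1 ^ a) = fun _ => 0 := funext fun q => pdf1 a q
  rw [this]; simp [pd]

lemma ΓB_apply (C : Fin 2 → Fin 2 → Fin 2 → ℝ) (i j k : Fin 2) :
    ΓB C i j k = fun p : ℝ × ℝ => C i j k / p.1 := rfl

set_option maxHeartbeats 2000000 in
theorem typeB_quasiEinstein_general_mu
    (C : Fin 2 → Fin 2 → Fin 2 → ℝ)
    (hsym : ∀ i j k, C i j k = C j i k)
    (ε : ℝ) (hε : ε = 1 ∨ ε = -1)
    (h1 : C 0 1 0 = 0) (h2 : C 1 1 0 = ε)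
    (h3 : C 1 1 1 = 2 * ε * C 0 0 1)
    (h4 : C 0 0 0 - C 0 1 1 - 1 ≠ 0)
    (μ α : ℝ)
    (hμ : μ = (-(C 0 0 0) ^ 2 + 2 * C 0 0 0 * C 0 1 1 + 2 * ε * (C 0 0 1) ^ 2
        - (C 0 1 1) ^ 2 + 2 * C 0 1 1 + 1) / (C 0 0 0 - C 0 1 1 - 1) ^ 2)
    (hα : α = μ * (1 + C 0 1 1 - C 0 0 0)) :
    ∀ i j : Fin 2, ∀ p : ℝ × ℝ, 0 < p.1 →
      Hess (ΓB C) (fun q => q.1 ^ α) i j p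
        = μ * (p.1 ^ α) * RicS (ΓB C) i j p := by
  intro i j p hp
  have hne : p.1 ≠ 0 := ne_of_gt hp
  have A := fun c => pd0_div c p hne
  have B := fun c => pd1_div c p
  have e1 : p.1 ^ (α - 1) = p.1 ^ α / p.1 := by
    rw [Real.rpow_sub hp, Real.rpow_one]
  have e2 : p.1 ^ (α - 2) = p.1 ^ α / p.1 ^ 2 := by
    rw [Real.rpow_sub hp, Real.rpow_two]
  have hd : (C 0 0 0 - C 0 1 1 - 1) ^ 2 ≠ 0 := pow_ne_zero _ h4
  fin_cases i <;> fin_cases j <;>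
  · simp only [Fin.mk_zero, Fin.mk_one, Fin.isValue, Hess, RicS, Ric, ΓB, ΓB_apply,
      Fin.sum_univ_two, pdf00 α p hp, pdf0 α p hne, pdf1, pdf01, pdf10, pdf11,
      A, B, hsym 1 0, h1, h2, h3, e1, e2]
    generalize p.1 ^ α = y
    subst hα
    subst hμ
    clear e1 e2 A B hsym h1 h2 h3 hp
    rcases hε with rfl | rfl <;> field_simp <;> (try ring) <;> tauto
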